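/- Let U_1,...,U_I be i.i.d. uniform on [0,1], let s = min_i U_i with density f_s(x) = I(1-x)^{I-1} 1_{[0,1]}(x), and let s' be exponentially distributed with rate I, density f_{s'}(x) = I e^{-Ix} 1_{[0,∞)}(x). Then the squared Hellinger distance satisfies H²(f_s, f_{s'}) ≥ c·I^{-2} for some absolute constant c > 0 and all sufficiently large I. -/

import Mathlib

open Set MeasureTheory

set_option maxHeartbeats 1000000 in
/-- Pointwise lower bound on the Hellinger integrand on `[1/(4I), 1/(2I)]`. -/
lemma stmt11_pointwise (I : ℕ) (hI : 3 ≤ I) (x : ℝ)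
    (hx : x ∈ Icc (1 / (4 * (I : ℝ))) (1 / (2 * (I : ℝ)))) :
    1 / (1600 * (I : ℝ)) ≤
      (Real.sqrt ((I : ℝ) * (1 - x) ^ (I - 1)) -
        Real.sqrt ((I : ℝ) * Real.exp (-(I : ℝ) * x))) ^ 2 := by
  have hIR : (3 : ℝ) ≤ (I : ℝ) := by exact_mod_cast hI
  have hIpos : (0 : ℝ) < (I : ℝ) := by linarith
  obtain ⟨hx1, hx2⟩ := hx
  have hxpos : 0 < x := lt_of_lt_of_le (by positivity) hx1
  have hx1' : 1 ≤ x * (4 * (I : ℝ)) := by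
    rw [div_le_iff₀ (by positivity)] at hx1; linarith
  have hx2' : x * (2 * (I : ℝ)) ≤ 1 := by
    rw [le_div_iff₀ (by positivity)] at hx2; linarith
  have hIx : (I : ℝ) * x ≤ 1 / 2 := by nlinarith
  have hx6 : x ≤ 1 / 6 := by nlinarith
  have h1x : (0 : ℝ) < 1 - x := by linarith
  -- log lower bound : log (1-x) ≥ -x - (6/5) x²
  set L : ℝ := Real.log (1 - x) with hL
  have hlog : -x - (6/5) * x ^ 2 ≤ L := by
    have h := Real.log_le_sub_one_of_pos (x := (1 - x)⁻¹) (by positivity)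
    rw [Real.log_inv] at h
    have hinv : (1 - x)⁻¹ - 1 = x / (1 - x) := by field_simp; ring
    rw [hinv] at h
    have hfrac : x / (1 - x) ≤ x + (6/5) * x ^ 2 := by
      rw [div_le_iff₀ h1x]; nlinarith
    rw [hL]; linarith
  -- exponent g = I x + (I-1) L ≥ (2/5) x
  set g : ℝ := (I : ℝ) * x + ((I : ℝ) - 1) * L with hg
  have hI1x : ((I : ℝ) - 1) * x ≤ 1 / 2 := by nlinarith
  have hgge : (2/5) * x ≤ g := by
    have h1 : ((I : ℝ) - 1) * (-x - (6/5) * x ^ 2) ≤ ((I : ℝ) - 1) * L :=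
      mul_le_mul_of_nonneg_left hlog (by linarith)
    have h2 : (6/5) * (((I : ℝ) - 1) * x) * x ≤ (3/5) * x := by nlinarith
    rw [hg]; nlinarith
  have hgpos : 0 ≤ g := by linarith
  -- a = (1-x)^(I-1), b = exp(-I x)
  set a : ℝ := (1 - x) ^ (I - 1) with ha
  set b : ℝ := Real.exp (-(I : ℝ) * x) with hb
  have haexp : a = Real.exp (((I : ℝ) - 1) * L) := by
    rw [ha, hL]
    have hcast : ((I : ℝ) - 1) = ((I - 1 : ℕ) : ℝ) := by
      have h1 : 1 ≤ I := by omega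
      push_cast [Nat.cast_sub h1]; ring
    rw [hcast, Real.exp_nat_mul, Real.exp_log h1x]
  have hbhalf : 1 / 2 ≤ b := by
    have h := Real.add_one_le_exp (-(I : ℝ) * x)
    rw [hb]; linarith
  have hble1 : b ≤ 1 := by
    rw [hb, Real.exp_le_one_iff]; nlinarith
  have hale1 : a ≤ 1 := by
    rw [ha]
    exact pow_le_one₀ (by linarith) (by linarith)
  have hab2 : a = b * Real.exp g := by
    rw [haexp, hb, ← Real.exp_add]
    congr 1
    rw [hg]; ring
  have hab : (1/5) * x ≤ a - b := by
    have hexpg : 1 + g ≤ Real.exp g := by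
      have := Real.add_one_le_exp g; linarith
    have h3 : b * (1 + g) ≤ b * Real.exp g :=
      mul_le_mul_of_nonneg_left hexpg (by linarith)
    have hbg : (1 / 2) * ((2/5) * x) ≤ b * g :=
      mul_le_mul hbhalf hgge (by positivity) (by linarith)
    nlinarith
  have habI : 1 ≤ (a - b) * (20 * (I : ℝ)) := by
    have h4 : ((1/5) * x) * (20 * (I : ℝ)) ≤ (a - b) * (20 * (I : ℝ)) :=
      mul_le_mul_of_nonneg_right hab (by positivity)
    nlinarith
  -- sqrt difference
  have hanneg : 0 ≤ a := by rw [ha]; positivity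
  have hbnneg : 0 ≤ b := by linarith
  have hsa : Real.sqrt a ^ 2 = a := Real.sq_sqrt hanneg
  have hsb : Real.sqrt b ^ 2 = b := Real.sq_sqrt hbnneg
  have hsa1 : Real.sqrt a ≤ 1 := Real.sqrt_le_one.mpr hale1
  have hsb1 : Real.sqrt b ≤ 1 := Real.sqrt_le_one.mpr hble1
  have hsbnn : 0 ≤ Real.sqrt b := Real.sqrt_nonneg b
  have hsann : 0 ≤ Real.sqrt a := Real.sqrt_nonneg a
  have hgap : Real.sqrt b ≤ Real.sqrt a :=
    Real.sqrt_le_sqrt (by nlinarith)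
  have hkey : (Real.sqrt a - Real.sqrt b) * (Real.sqrt a + Real.sqrt b)
      = a - b := by
    have hr : (Real.sqrt a - Real.sqrt b) * (Real.sqrt a + Real.sqrt b)
        = Real.sqrt a ^ 2 - Real.sqrt b ^ 2 := by ring
    rw [hr, hsa, hsb]
  have hsd : 1 ≤ (Real.sqrt a - Real.sqrt b) * (40 * (I : ℝ)) := by
    have h5 : (Real.sqrt a - Real.sqrt b) * (Real.sqrt a + Real.sqrt b) ≤
        (Real.sqrt a - Real.sqrt b) * 2 :=
      mul_le_mul_of_nonneg_left (by linarith) (by linarith)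
    have h6 : (a - b) * (20 * (I : ℝ)) ≤
        ((Real.sqrt a - Real.sqrt b) * 2) * (20 * (I : ℝ)) :=
      mul_le_mul_of_nonneg_right (by rw [← hkey]; exact h5) (by positivity)
    nlinarith
  -- conclude
  rw [Real.sqrt_mul hIpos.le, Real.sqrt_mul hIpos.le, ← mul_sub, mul_pow,
    Real.sq_sqrt hIpos.le]
  have h2 : (1 : ℝ) ≤ ((Real.sqrt a - Real.sqrt b) * (40 * (I : ℝ))) ^ 2 := by
    nlinarith [hsd]
  rw [div_le_iff₀ (by positivity : (0:ℝ) < 1600 * (I : ℝ))]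
  calc (1 : ℝ) ≤ ((Real.sqrt a - Real.sqrt b) * (40 * (I : ℝ))) ^ 2 := h2
  _ = (I : ℝ) * (Real.sqrt a - Real.sqrt b) ^ 2 * (1600 * (I : ℝ)) := by ring

set_option maxHeartbeats 1000000 in
theorem stmt11 : ∃ c : ℝ, 0 < c ∧ ∃ I₀ : ℕ, ∀ I : ℕ, I₀ ≤ I →
    c / (I : ℝ) ^ 2 ≤
      ∫ x, (Real.sqrt (Set.indicator (Icc (0:ℝ) 1)
          (fun x => (I : ℝ) * (1 - x) ^ (I - 1)) x) -
        Real.sqrt (Set.indicator (Ici (0:ℝ))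
          (fun x => (I : ℝ) * Real.exp (-(I : ℝ) * x)) x)) ^ 2 := by
  refine ⟨1 / 6400, by norm_num, 3, fun I hI => ?_⟩
  have hIR : (3 : ℝ) ≤ (I : ℝ) := by exact_mod_cast hI
  have hIpos : (0 : ℝ) < (I : ℝ) := by linarith
  have hIne : (I : ℝ) ≠ 0 := ne_of_gt hIpos
  set u : ℝ → ℝ := Set.indicator (Icc (0:ℝ) 1)
    (fun x => (I : ℝ) * (1 - x) ^ (I - 1)) with hu
  set v : ℝ → ℝ := Set.indicator (Ici (0:ℝ))
    (fun x => (I : ℝ) * Real.exp (-(I : ℝ) * x)) with hv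
  set F : ℝ → ℝ := fun x => (Real.sqrt (u x) - Real.sqrt (v x)) ^ 2 with hF
  -- nonnegativity
  have hunn : ∀ x, 0 ≤ u x := by
    intro x
    apply Set.indicator_nonneg
    intro y hy
    have : (0:ℝ) ≤ 1 - y := by linarith [hy.2]
    positivity
  have hvnn : ∀ x, 0 ≤ v x := by
    intro x
    apply Set.indicator_nonneg
    intro y _
    positivity
  have hFnn : ∀ x, 0 ≤ F x := fun x => sq_nonneg _
  -- integrability
  have hui : Integrable u :=
    ((continuous_const.mul ((continuous_const.sub
      continuous_id).pow _)).integrableOn_Icc).integrable_indicator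
      measurableSet_Icc
  have hvi : Integrable v := by
    apply IntegrableOn.integrable_indicator _ measurableSet_Ici
    rw [integrableOn_Ici_iff_integrableOn_Ioi]
    exact (exp_neg_integrableOn_Ioi 0 hIpos).const_mul _
  have hFi : Integrable F := by
    have hmeas : AEStronglyMeasurable F volume := by
      apply Continuous.comp_aestronglyMeasurable (g := fun p : ℝ × ℝ =>
        (Real.sqrt p.1 - Real.sqrt p.2) ^ 2) (by fun_prop)
        (hui.1.prodMk hvi.1)
    apply Integrable.mono ((hui.add hvi).const_mul 2) hmeas
    filter_upwards with x
    have h1 : |Real.sqrt (u x) - Real.sqrt (v x)| ^ 2 ≤ 2 * (u x + v x) := by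
      have := Real.sq_sqrt (hunn x)
      have := Real.sq_sqrt (hvnn x)
      have := Real.sqrt_nonneg (u x)
      have := Real.sqrt_nonneg (v x)
      rw [sq_abs]
      nlinarith
    simp only [Real.norm_eq_abs]
    rw [abs_of_nonneg (hFnn x)]
    calc F x = |Real.sqrt (u x) - Real.sqrt (v x)| ^ 2 := by rw [sq_abs]
    _ ≤ 2 * (u x + v x) := h1
    _ ≤ |2 * (u x + v x)| := le_abs_self _
  -- restrict to the interval
  set s : Set ℝ := Icc (1 / (4 * (I : ℝ))) (1 / (2 * (I : ℝ))) with hs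
  have hstep : ∫ x in s, F x ≤ ∫ x, F x :=
    setIntegral_le_integral hFi (Filter.Eventually.of_forall hFnn)
  have hmeasS : (volume s).toReal = 1 / (4 * (I : ℝ)) := by
    rw [hs, Real.volume_Icc, ENNReal.toReal_ofReal (by
      rw [sub_nonneg]
      apply div_le_div_of_nonneg_left (by norm_num) (by positivity)
      linarith)]
    rw [div_sub_div _ _ (by positivity) (by positivity)]
    field_simp
    ring
  have hlower : ∀ x ∈ s, 1 / (1600 * (I : ℝ)) ≤ F x := by
    intro x hx
    have hx01 : x ∈ Icc (0:ℝ) 1 := by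
      constructor
      · linarith [hx.1, (by positivity : (0:ℝ) < 1 / (4 * (I : ℝ)))]
      · have : 1 / (2 * (I : ℝ)) ≤ 1 := by
          rw [div_le_one (by positivity)]; linarith
        linarith [hx.2]
    have hxIci : x ∈ Ici (0:ℝ) := hx01.1
    have hux : u x = (I : ℝ) * (1 - x) ^ (I - 1) :=
      Set.indicator_of_mem hx01 _
    have hvx : v x = (I : ℝ) * Real.exp (-(I : ℝ) * x) :=
      Set.indicator_of_mem hxIci _
    rw [hF]
    simp only [hux, hvx]
    exact stmt11_pointwise I hI x hx
  have hconst : (1 / (1600 * (I : ℝ))) * (volume s).toReal ≤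
      ∫ x in s, F x :=
    setIntegral_ge_of_const_le_real measurableSet_Icc
      (by rw [Real.volume_Icc]; exact ENNReal.ofReal_ne_top)
      hlower hFi.integrableOn
  have hfinal : (1 : ℝ) / 6400 / (I : ℝ) ^ 2 =
      (1 / (1600 * (I : ℝ))) * (1 / (4 * (I : ℝ))) := by
    field_simp
    ring
  rw [hfinal, ← hmeasS]
  calc (1 / (1600 * (I : ℝ))) * (volume s).toReal ≤ ∫ x in s, F x := hconst
  _ ≤ ∫ x, F x := hstep
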